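/- Let f = (1/n) Σ_{i=1}^n f_i with each f_i convex, differentiable, L-smooth, and x* a minimizer of f. Then (1/(2nL)) Σ_{i=1}^n ‖∇f_i(x*) - ∇f_i(x)‖² ≤ f(x) - f(x*) for every x ∈ ℝ^d. -/

import Mathlib

open RealInnerProductSpace

/-- First-order condition for a convex differentiable function. -/
lemma convex_first_order {d : ℕ} {h : EuclideanSpace ℝ (Fin d) → ℝ}
    {gy y : EuclideanSpace ℝ (Fin d)}
    (hc : ConvexOn ℝ Set.univ h) (hg : HasGradientAt h gy y)
    (z : EuclideanSpace ℝ (Fin d)) :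
    h y + ⟪gy, z - y⟫ ≤ h z := by
  set ψ : ℝ → ℝ := fun t => h (y + t • (z - y)) with hψ
  have hc0 : (fun t : ℝ => y + t • (z - y)) 0 = y := by simp
  have hd : HasDerivAt ψ ⟪gy, z - y⟫ 0 := by
    have hline : HasDerivAt (fun t : ℝ => y + t • (z - y)) (z - y) 0 := by
      simpa using ((hasDerivAt_id (0 : ℝ)).smul_const (z - y)).const_add y
    have hF : HasFDerivAt h (InnerProductSpace.toDual ℝ _ gy)
        ((fun t : ℝ => y + t • (z - y)) 0) := by
      rw [hc0]; exact hg.hasFDerivAt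
    have := hF.comp_hasDerivAt (0 : ℝ) hline
    simp only [InnerProductSpace.toDual_apply_apply] at this; exact this
  have hslope : Filter.Tendsto (slope ψ 0) (nhdsWithin 0 (Set.Ioi 0)) (nhds ⟪gy, z - y⟫) :=
    (hasDerivAt_iff_tendsto_slope.mp hd).mono_left
      (nhdsWithin_mono 0 (fun t ht => ne_of_gt ht))
  have hψ0 : ψ 0 = h y := by simp [hψ]
  have hb : ∀ᶠ t in nhdsWithin (0 : ℝ) (Set.Ioi 0), slope ψ 0 t ≤ h z - h y := by
    filter_upwards [Ioc_mem_nhdsGT_of_mem (by constructor <;> norm_num :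
      (0 : ℝ) ∈ Set.Ico (0 : ℝ) 1)] with t ht
    have ht0 : 0 < t := ht.1
    have hct : ψ t ≤ (1 - t) * h y + t * h z := by
      have he : y + t • (z - y) = (1 - t) • y + t • z := by
        module
      have := hc.2 (Set.mem_univ y) (Set.mem_univ z)
        (by linarith [ht.2] : (0 : ℝ) ≤ 1 - t) ht0.le (by ring)
      simpa [hψ, he, smul_eq_mul] using this
    rw [slope_def_field, div_le_iff₀ (by simpa using ht0)]
    simp only [hψ0, sub_zero]
    nlinarith [hct]
  have := le_of_tendsto hslope hb
  linarith

/-- Cocoercivity-type lower bound for convex L-smooth functions. -/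
lemma convex_smooth_lb {d : ℕ} {L : ℝ} (hL : 0 < L)
    {h : EuclideanSpace ℝ (Fin d) → ℝ}
    {g : EuclideanSpace ℝ (Fin d) → EuclideanSpace ℝ (Fin d)}
    (hc : ConvexOn ℝ Set.univ h) (hg : ∀ x, HasGradientAt h (g x) x)
    (hs : ∀ x y, h x - h y - ⟪g y, x - y⟫ ≤ L / 2 * ‖x - y‖ ^ 2)
    (x y : EuclideanSpace ℝ (Fin d)) :
    1 / (2 * L) * ‖g x - g y‖ ^ 2 ≤ h x - h y - ⟪g y, x - y⟫ := by
  set u : EuclideanSpace ℝ (Fin d) := g x - g y with hu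
  set z : EuclideanSpace ℝ (Fin d) := x - (1 / L) • u with hz
  have h1 : h y + ⟪g y, z - y⟫ ≤ h z := convex_first_order hc (hg y) z
  have h2 : h z - h x - ⟪g x, z - x⟫ ≤ L / 2 * ‖z - x‖ ^ 2 := hs z x
  have hzx : z - x = -((1 / L) • u) := by rw [hz]; abel
  have hnorm : ‖z - x‖ ^ 2 = (1 / L) ^ 2 * ‖u‖ ^ 2 := by
    rw [hzx, norm_neg, norm_smul]
    simp [abs_of_pos (one_div_pos.mpr hL), mul_pow]
  have hip1 : ⟪g x, z - x⟫ = -(1 / L) * ⟪g x, u⟫ := by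
    rw [hzx, inner_neg_right, real_inner_smul_right]; ring
  have hip2 : ⟪g y, z - y⟫ = ⟪g y, x - y⟫ - (1 / L) * ⟪g y, u⟫ := by
    have : z - y = (x - y) - (1 / L) • u := by rw [hz]; abel
    rw [this, inner_sub_right, real_inner_smul_right]
  have hiu : ⟪g x, u⟫ - ⟪g y, u⟫ = ‖u‖ ^ 2 := by
    rw [← inner_sub_left, ← hu, real_inner_self_eq_norm_sq]
  have he : L / 2 * ((1 / L) ^ 2 * ‖u‖ ^ 2) = 1 / (2 * L) * ‖u‖ ^ 2 := by
    field_simp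
  have hmul : (1 / L) * ⟪g x, u⟫ - (1 / L) * ⟪g y, u⟫ = (1 / L) * ‖u‖ ^ 2 := by
    rw [← mul_sub, hiu]
  have h3 : (1 / L) * ‖u‖ ^ 2 = 2 * (1 / (2 * L) * ‖u‖ ^ 2) := by
    field_simp
  rw [hip2] at h1
  rw [hip1, hnorm, he] at h2
  linarith

/-- For `f = (1/n) Σᵢ fᵢ` with convex `L`-smooth components and minimizer `x*`,
`(1/(2nL)) Σᵢ ‖∇fᵢ(x*) - ∇fᵢ(x)‖² ≤ f(x) - f(x*)` for every `x`. -/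
theorem gradient_gap_bound (d n : ℕ) (hn : 0 < n) (L : ℝ) (hL : 0 < L)
    (f : Fin n → EuclideanSpace ℝ (Fin d) → ℝ)
    (g : Fin n → EuclideanSpace ℝ (Fin d) → EuclideanSpace ℝ (Fin d))
    (hconv : ∀ i, ConvexOn ℝ Set.univ (f i))
    (hgrad : ∀ i x, HasGradientAt (f i) (g i x) x)
    (hsmooth : ∀ i x y, f i x - f i y - ⟪g i y, x - y⟫ ≤ L / 2 * ‖x - y‖ ^ 2)
    (xstar : EuclideanSpace ℝ (Fin d))
    (hmin : ∀ x, (1 / (n : ℝ)) * ∑ i, f i xstar ≤ (1 / (n : ℝ)) * ∑ i, f i x) :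
    ∀ x, (1 / (2 * (n : ℝ) * L)) * ∑ i, ‖g i xstar - g i x‖ ^ 2
      ≤ (1 / (n : ℝ)) * ∑ i, f i x - (1 / (n : ℝ)) * ∑ i, f i xstar := by
  intro x
  have hn' : (0 : ℝ) < n := Nat.cast_pos.mpr hn
  -- sum of gradients vanishes at the minimizer
  have hgsum : (∑ i, g i xstar) = 0 := by
    have hS : HasFDerivAt (fun y => ∑ i, f i y)
        (∑ i, InnerProductSpace.toDual ℝ _ (g i xstar)) xstar :=
      HasFDerivAt.fun_sum fun i _ => (hgrad i xstar).hasFDerivAt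
    have hminS : IsLocalMin (fun y => ∑ i, f i y) xstar := by
      apply Filter.Eventually.of_forall
      intro y
      have := hmin y
      have h1n : (0 : ℝ) < 1 / n := one_div_pos.mpr hn'
      exact le_of_mul_le_mul_left this h1n
    have hzero := hminS.hasFDerivAt_eq_zero hS
    have : InnerProductSpace.toDual ℝ (EuclideanSpace ℝ (Fin d)) (∑ i, g i xstar) = 0 := by
      rw [map_sum]; exact hzero
    have := congrArg (InnerProductSpace.toDual ℝ (EuclideanSpace ℝ (Fin d))).symm this
    simpa using this
  -- per-component lower bound
  have hkey : ∀ i : Fin n, 1 / (2 * L) * ‖g i xstar - g i x‖ ^ 2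
      ≤ f i x - f i xstar - ⟪g i xstar, x - xstar⟫ := by
    intro i
    have := convex_smooth_lb hL (hconv i) (hgrad i) (hsmooth i) x xstar
    rwa [norm_sub_rev] at this
  have hsumkey : ∑ i, 1 / (2 * L) * ‖g i xstar - g i x‖ ^ 2
      ≤ ∑ i, (f i x - f i xstar - ⟪g i xstar, x - xstar⟫) :=
    Finset.sum_le_sum fun i _ => hkey i
  have hrhs : ∑ i, (f i x - f i xstar - ⟪g i xstar, x - xstar⟫)
      = ∑ i, f i x - ∑ i, f i xstar := by
    rw [Finset.sum_sub_distrib, Finset.sum_sub_distrib, ← sum_inner, hgsum,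
      inner_zero_left, sub_zero]
  have hlhs : ∑ i, 1 / (2 * L) * ‖g i xstar - g i x‖ ^ 2
      = 1 / (2 * L) * ∑ i, ‖g i xstar - g i x‖ ^ 2 := by
    rw [Finset.mul_sum]
  rw [hlhs, hrhs] at hsumkey
  have hfinal : (1 / (2 * (n : ℝ) * L)) * ∑ i, ‖g i xstar - g i x‖ ^ 2
      = (1 / n) * (1 / (2 * L) * ∑ i, ‖g i xstar - g i x‖ ^ 2) := by
    ring
  rw [hfinal, ← mul_sub]
  exact mul_le_mul_of_nonneg_left hsumkey (by positivity)
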